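/- If I : ℤIrr(B) → ℤIrr(B') and J : ℤIrr(B') → ℤIrr(B'') are perfect isometries, then the composition J∘I : ℤIrr(B) → ℤIrr(B'') is a perfect isometry; moreover μ_{J∘I}(g,k) = (1/|H|) Σ_{h∈H} μ_I(g,h⁻¹) μ_J(h,k) for all g ∈ G, k ∈ K. Hence being perfectly isometric is an equivalence relation on p-blocks. -/

import Mathlib

open scoped BigOperators
open Finset

noncomputable section

/-- `χ : G → ℂ` is an irreducible complex character of the finite group `G`. -/
def IsIrrChar (G : Type) [Group G] [Fintype G] (χ : G → ℂ) : Prop :=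
  ∃ V : FDRep ℂ G, CategoryTheory.Simple V ∧ χ = V.character

/-- An element is `p`-regular if `p` does not divide its order. -/
def pRegular (p : ℕ) {G : Type} [Monoid G] (g : G) : Prop :=
  ¬ p ∣ orderOf g

/-- The `p`-part of a natural number. -/
def pPart (p n : ℕ) : ℕ := p ^ (n.factorization p)

/-- The `p`-part of the order of the centralizer of `g`. -/
def centOrderP (p : ℕ) {G : Type} [Group G] (g : G) : ℕ :=
  pPart p (Nat.card (Subgroup.centralizer ({g} : Set G)))

/-- The usual inner product of class functions on a finite group. -/
def innerChar (G : Type) [Group G] [Fintype G] (χ ψ : G → ℂ) : ℂ :=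
  (Fintype.card G : ℂ)⁻¹ * ∑ g : G, χ g * ψ g⁻¹

/-- The group `ℤIrr(B)` of generalized characters of a block `B`, realized as the
`ℤ`-span of the characters in `B` inside the functions `G → ℂ`. -/
def ZIrr {G : Type} [Group G] [Fintype G] (B : Finset (G → ℂ)) : Submodule ℤ (G → ℂ) :=
  Submodule.span ℤ (B : Set (G → ℂ))

/-- A character `χ ∈ B` viewed as an element of `ℤIrr(B)`. -/
def elt {G : Type} [Group G] [Fintype G] {B : Finset (G → ℂ)} (χ : G → ℂ) (h : χ ∈ B) :
    ZIrr B :=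
  ⟨χ, Submodule.subset_span (Finset.mem_coe.mpr h)⟩

/-- Broué's function `μ_I(g,h) = ∑_{χ ∈ Irr(B)} χ(g)·I(χ)(h)`. -/
def muI {G H : Type} [Group G] [Fintype G] [Group H] [Fintype H]
    {B : Finset (G → ℂ)} {B' : Finset (H → ℂ)}
    (I : ZIrr B →ₗ[ℤ] ZIrr B') (g : G) (h : H) : ℂ :=
  ∑ χ ∈ B.attach, χ.1 g * ((I (elt χ.1 χ.2) : ZIrr B') : H → ℂ) h

/-- Broué's notion of a perfect isometry: an inner-product preserving `ℤ`-linear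
bijection `ℤIrr(B) → ℤIrr(B')` satisfying the separation condition (sep) and the
integrality condition (int). -/
def IsPerfIso (p : ℕ) {G H : Type} [Group G] [Fintype G] [Group H] [Fintype H]
    (B : Finset (G → ℂ)) (B' : Finset (H → ℂ)) (I : ZIrr B ≃ₗ[ℤ] ZIrr B') : Prop :=
  (∀ x y : ZIrr B,
      innerChar H (I x : H → ℂ) (I y : H → ℂ) = innerChar G (x : G → ℂ) (y : G → ℂ)) ∧
  (∀ (g : G) (h : H), Xor' (pRegular p g) (pRegular p h) → muI I.toLinearMap g h = 0) ∧
  (∀ (g : G) (h : H), IsIntegral ℤ (muI I.toLinearMap g h / (centOrderP p g : ℂ)) ∧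
      IsIntegral ℤ (muI I.toLinearMap g h / (centOrderP p h : ℂ)))

/-- By Osima's theorem, `B` is a union of `p`-blocks iff it consists of irreducible
characters and satisfies block orthogonality between `p`-regular and `p`-singular
columns. -/
def IsBlockUnion (p : ℕ) (G : Type) [Group G] [Fintype G] (B : Finset (G → ℂ)) : Prop :=
  (∀ χ ∈ B, IsIrrChar G χ) ∧
  ∀ g h : G, pRegular p g → ¬ pRegular p h → ∑ χ ∈ B, χ g * χ h = 0

/-- A `p`-block of `G`: a minimal nonempty union of blocks. -/
def IsBlock (p : ℕ) (G : Type) [Group G] [Fintype G] (B : Finset (G → ℂ)) : Prop :=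
  IsBlockUnion p G B ∧ B.Nonempty ∧
    ∀ C ⊆ B, IsBlockUnion p G C → C = ∅ ∨ C = B

section AuxChar

open Polynomial

lemma PIaux.charpoly_root_pow {n : Type} [Fintype n] [DecidableEq n] (M : Matrix n n ℂ)
    {m : ℕ} (hM : M ^ m = 1) {t : ℂ} (ht : M.charpoly.IsRoot t) :
    t ^ m = 1 := by
  have hdet : (t • (1 : Matrix n n ℂ) - M).det = 0 := by
    have h0 : M.charpoly.eval t = ((Matrix.charmatrix M).map (evalRingHom t)).det := by
      have h := RingHom.map_det (evalRingHom t) (Matrix.charmatrix M)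
      rw [RingHom.mapMatrix_apply] at h
      exact h
    have hmap : (Matrix.charmatrix M).map (evalRingHom t) = t • 1 - M := by
      ext i j
      by_cases h : i = j <;>
        simp [h, Matrix.charmatrix_apply, Matrix.one_apply, Matrix.diagonal_apply]
    rw [hmap] at h0
    rw [← h0]
    exact ht
  obtain ⟨v, hv0, hv⟩ := (Matrix.exists_mulVec_eq_zero_iff).mpr hdet
  have hMv : ∀ j : ℕ, (M ^ j).mulVec v = t ^ j • v := by
    have h1 : M.mulVec v = t • v := by
      have := Matrix.sub_mulVec (t • (1 : Matrix n n ℂ)) M v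
      rw [hv, Matrix.smul_mulVec, Matrix.one_mulVec] at this
      exact (sub_eq_zero.mp this.symm).symm
    intro j
    induction j with
    | zero => simp [Matrix.one_mulVec]
    | succ j ih =>
        rw [pow_succ, ← Matrix.mulVec_mulVec, h1, Matrix.mulVec_smul, ih, pow_succ,
          smul_smul, mul_comm]
  have h2 := hMv m
  rw [hM, Matrix.one_mulVec] at h2
  obtain ⟨i, hi⟩ := Function.ne_iff.mp hv0
  have h3 : v i = t ^ m * v i := congrFun h2 i
  by_contra hne
  exact hi (by
    have h5 := sub_eq_zero.mpr h3.symm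
    have h4 : (t ^ m - 1) * v i = 0 := by ring_nf; linear_combination h5
    rcases mul_eq_zero.mp h4 with h | h
    · exact absurd (by linear_combination h) hne
    · exact h)

lemma PIaux.trace_integral_of_pow_eq_one {n : Type} [Fintype n] [DecidableEq n]
    (M : Matrix n n ℂ) {m : ℕ} (hm : m ≠ 0) (hM : M ^ m = 1) :
    IsIntegral ℤ M.trace := by
  rw [Matrix.trace_eq_sum_roots_charpoly]
  refine IsIntegral.multiset_sum ?_
  intro t ht
  have hroot := Polynomial.isRoot_of_mem_roots ht
  have hpow := PIaux.charpoly_root_pow M hM hroot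
  exact ⟨X ^ m - C 1, monic_X_pow_sub_C 1 hm, by simp [hpow]⟩

lemma PIaux.char_value_integral {G : Type} [Group G] [Fintype G] (V : FDRep ℂ G) (g : G) :
    IsIntegral ℤ (V.character g) := by
  classical
  let b := Module.finBasis ℂ V
  have htr : V.character g = (LinearMap.toMatrix b b (V.ρ g)).trace := by
    rw [FDRep.character]
    exact LinearMap.trace_eq_matrix_trace ℂ b (V.ρ g)
  rw [htr]
  refine PIaux.trace_integral_of_pow_eq_one _ (m := orderOf g) (orderOf_pos g).ne' ?_
  rw [LinearMap.toMatrix_pow, ← map_pow, pow_orderOf_eq_one, map_one, LinearMap.toMatrix_one]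

lemma PIaux.natCast_integral (m : ℕ) : IsIntegral ℤ ((m : ℕ) : ℂ) := by
  simpa using (isIntegral_one (R := ℤ) (B := ℂ)).nsmul m

lemma PIaux.intCast_integral (m : ℤ) : IsIntegral ℤ ((m : ℤ) : ℂ) := by
  simpa using (isIntegral_one (R := ℤ) (B := ℂ)).zsmul m

lemma PIaux.coprime_divisors_integral {X : ℂ} {a b : ℕ} (hab : Nat.Coprime a b)
    (ha : IsIntegral ℤ ((a : ℂ) * X)) (hb : IsIntegral ℤ ((b : ℂ) * X)) :
    IsIntegral ℤ X := by
  have hb' := Nat.gcd_eq_gcd_ab a b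
  rw [hab] at hb'
  have hcast : (1 : ℂ) = (a : ℂ) * ((Nat.gcdA a b : ℤ) : ℂ) + (b : ℂ) * ((Nat.gcdB a b : ℤ) : ℂ) := by
    exact_mod_cast congrArg (fun z : ℤ => (z : ℂ)) hb'
  have key : X = ((Nat.gcdA a b : ℤ) : ℂ) * ((a : ℂ) * X) + ((Nat.gcdB a b : ℤ) : ℂ) * ((b : ℂ) * X) := by
    linear_combination X * hcast
  rw [key]
  exact ((PIaux.intCast_integral _).mul ha).add ((PIaux.intCast_integral _).mul hb)

end AuxChar

lemma PIaux.arith {A Bb Cc M m1 m2 : ℂ} (hA : A ≠ 0) (hB : Bb ≠ 0) (hC : Cc ≠ 0) :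
    (Bb * M) * ((A * Bb)⁻¹ * (m1 * m2) / Cc) = (m1 / Cc) * (m2 / A) * M := by
  field_simp

lemma PIaux.arith2 {A Bb Cc M m1 m2 : ℂ} (hA : A ≠ 0) (hB : Bb ≠ 0) (hC : Cc ≠ 0) :
    (Bb * M) * ((A * Bb)⁻¹ * (m1 * m2) / Cc) = (m1 / A) * (m2 / Cc) * M := by
  field_simp

section AuxGroup

variable {H : Type} [Group H] [Fintype H]

lemma PIaux.centralizer_inv (h : H) :
    Subgroup.centralizer ({h⁻¹} : Set H) = Subgroup.centralizer ({h} : Set H) := by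
  ext x
  simp only [Subgroup.mem_centralizer_iff, Set.mem_singleton_iff, forall_eq]
  constructor
  · intro hx
    have h1 : Commute h⁻¹ x := hx
    have := (Commute.inv_left_iff).mp h1
    exact this
  · intro hx
    have h1 : Commute h x := hx
    exact (Commute.inv_left_iff).mpr h1

lemma PIaux.pRegular_inv {p : ℕ} (h : H) : pRegular p h⁻¹ ↔ pRegular p h := by
  unfold pRegular
  rw [orderOf_inv]

lemma PIaux.card_fiber_mul_card_centralizer [DecidableEq H] (h₀ : H) :
    (Finset.univ.filter fun h' : H => IsConj h₀ h').card
        * Nat.card (Subgroup.centralizer ({h₀} : Set H)) = Fintype.card H := by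
  classical
  letI : Fintype ↥(MulAction.orbit (ConjAct H) h₀) := Fintype.ofFinite _
  letI : Fintype ↥(MulAction.stabilizer (ConjAct H) h₀) := Fintype.ofFinite _
  have horb := MulAction.card_orbit_mul_card_stabilizer_eq_card_group (ConjAct H) h₀
  have hstab : Nat.card (Subgroup.centralizer ({h₀} : Set H))
      = Fintype.card ↥(MulAction.stabilizer (ConjAct H) h₀) := by
    rw [← Nat.card_eq_fintype_card]
    rw [Subgroup.centralizer_eq_comap_stabilizer]
    exact Nat.card_congr (Equiv.subtypeEquiv ConjAct.toConjAct.toEquiv fun x => Iff.rfl)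
  have hfil : (Finset.univ.filter fun h' : H => IsConj h₀ h').card
      = Fintype.card ↥(MulAction.orbit (ConjAct H) h₀) := by
    rw [← Fintype.card_coe]
    refine Fintype.card_congr (Equiv.subtypeEquiv (Equiv.refl H) fun x => ?_)
    simp only [Finset.mem_coe, Finset.mem_filter, Finset.mem_univ, true_and,
      Equiv.refl_apply, ConjAct.mem_orbit_conjAct]
    exact isConj_comm
  have hcard : Fintype.card (ConjAct H) = Fintype.card H :=
    Fintype.card_congr ConjAct.ofConjAct.toEquiv
  rw [hfil, hstab, horb, hcard]

lemma PIaux.sum_over_classes [DecidableEq H] (F : H → ℂ)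
    (hF : ∀ u y : H, F (u * y * u⁻¹) = F y) :
    (Fintype.card H : ℂ)⁻¹ * ∑ h : H, F h
      = ∑ h₀ ∈ Finset.univ.image (fun h : H => (ConjClasses.mk h).out),
          (Nat.card (Subgroup.centralizer ({h₀} : Set H)) : ℂ)⁻¹ * F h₀ := by
  classical
  have hrepconj : ∀ h : H, IsConj h (ConjClasses.mk h).out := by
    intro h
    rw [← ConjClasses.mk_eq_mk_iff_isConj]
    exact (Quotient.out_eq _).symm
  have hFconj : ∀ {a b : H}, IsConj a b → F a = F b := by
    intro a b hab
    obtain ⟨c, hc⟩ := isConj_iff.mp hab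
    rw [← hc, hF]
  rw [← Finset.sum_fiberwise_of_maps_to (g := fun h : H => (ConjClasses.mk h).out)
        (fun x _ => Finset.mem_image_of_mem (fun h : H => (ConjClasses.mk h).out)
          (Finset.mem_univ x)) F]
  rw [Finset.mul_sum]
  refine Finset.sum_congr rfl fun h₀ hh₀ => ?_
  have hrep0 : (ConjClasses.mk h₀).out = h₀ := by
    obtain ⟨h₁, _, rfl⟩ := Finset.mem_image.mp hh₀
    exact congrArg Quotient.out (Quotient.out_eq _)
  have hfib : (Finset.univ.filter fun h : H => (ConjClasses.mk h).out = h₀)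
      = (Finset.univ.filter fun h : H => IsConj h₀ h) := by
    ext h
    simp only [Finset.mem_filter, Finset.mem_univ, true_and]
    constructor
    · intro hh
      rw [← hh]
      exact (hrepconj h).symm
    · intro hh
      rw [ConjClasses.mk_eq_mk_iff_isConj.mpr hh.symm, hrep0]
  rw [hfib]
  rw [Finset.sum_congr rfl fun h hh =>
        hFconj (isConj_comm.mp ((Finset.mem_filter.mp hh).2))]
  rw [Finset.sum_const, nsmul_eq_mul]
  have hkey := PIaux.card_fiber_mul_card_centralizer h₀
  have h1 : (Fintype.card H : ℂ) ≠ 0 := Nat.cast_ne_zero.mpr Fintype.card_ne_zero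
  have h2 : ((Nat.card (Subgroup.centralizer ({h₀} : Set H))) : ℂ) ≠ 0 :=
    Nat.cast_ne_zero.mpr Nat.card_pos.ne'
  have hkeyC : ((Finset.univ.filter fun h' : H => IsConj h₀ h').card : ℂ)
      * (Nat.card (Subgroup.centralizer ({h₀} : Set H)) : ℂ) = (Fintype.card H : ℂ) := by
    exact_mod_cast congrArg (Nat.cast : ℕ → ℂ) hkey
  rw [inv_mul_eq_div, inv_mul_eq_div, div_eq_div_iff h1 h2]
  linear_combination F h₀ * hkeyC

end AuxGroup

section AuxZIrr

variable {G H K : Type} [Group G] [Fintype G] [Group H] [Fintype H] [Group K] [Fintype K]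
variable {B : Finset (G → ℂ)} {B' : Finset (H → ℂ)} {B'' : Finset (K → ℂ)}

lemma PIaux.zirr_value_integral (hB : ∀ χ ∈ B, IsIrrChar G χ) {f : G → ℂ}
    (hf : f ∈ ZIrr B) (g : G) : IsIntegral ℤ (f g) := by
  induction hf using Submodule.span_induction with
  | mem x h =>
      obtain ⟨V, _, rfl⟩ := hB x (Finset.mem_coe.mp h)
      exact PIaux.char_value_integral V g
  | zero => simpa using isIntegral_zero
  | add x y hx hy ihx ihy => simpa using ihx.add ihy
  | smul a x hx ihx => simpa using ihx.zsmul a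

lemma PIaux.zirr_conj (hB : ∀ χ ∈ B, IsIrrChar G χ) {f : G → ℂ} (hf : f ∈ ZIrr B)
    (u y : G) : f (u * y * u⁻¹) = f y := by
  induction hf using Submodule.span_induction with
  | mem x h =>
      obtain ⟨V, _, rfl⟩ := hB x (Finset.mem_coe.mp h)
      exact FDRep.char_conj V y u
  | zero => simp
  | add x y hx hy ihx ihy => simp [ihx, ihy]
  | smul a x hx ihx => simp [ihx]

lemma PIaux.innerChar_right_zero (χ : G → ℂ) : innerChar G χ 0 = 0 := by
  simp [innerChar]

lemma PIaux.innerChar_right_add (χ f f' : G → ℂ) :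
    innerChar G χ (f + f') = innerChar G χ f + innerChar G χ f' := by
  simp only [innerChar, Pi.add_apply, Finset.mul_sum, ← Finset.sum_add_distrib]
  exact Finset.sum_congr rfl fun g _ => by ring

lemma PIaux.innerChar_right_zsmul (χ : G → ℂ) (z : ℤ) (f : G → ℂ) :
    innerChar G χ (z • f) = z • innerChar G χ f := by
  simp only [innerChar, Pi.smul_apply, zsmul_eq_mul, Finset.mul_sum]
  exact Finset.sum_congr rfl fun g _ => by ring

open scoped Classical in
lemma PIaux.irr_orthonormal (hB : ∀ χ ∈ B, IsIrrChar G χ) {χ ψ : G → ℂ} (hχ : χ ∈ B)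
    (hψ : ψ ∈ B) : innerChar G χ ψ = if χ = ψ then 1 else 0 := by
  haveI : Invertible (Nat.card G : ℂ) :=
    invertibleOfNonzero (Nat.cast_ne_zero.mpr Nat.card_pos.ne')
  rcases eq_or_ne χ ψ with rfl | hne
  · obtain ⟨V, hV, rfl⟩ := hB χ hχ
    rw [if_pos rfl]
    have h := FDRep.char_orthonormal (k := ℂ) (G := G) V V
    rw [if_pos ⟨CategoryTheory.Iso.refl V⟩] at h
    simpa [innerChar, Nat.card_eq_fintype_card] using h
  · rw [if_neg hne]
    obtain ⟨V, hV, hVc⟩ := hB χ hχ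
    obtain ⟨W, hW, hWc⟩ := hB ψ hψ
    subst hVc hWc
    have h := FDRep.char_orthonormal (k := ℂ) (G := G) V W
    rw [if_neg (fun ⟨i⟩ => hne (FDRep.char_iso i))] at h
    simpa [innerChar, Nat.card_eq_fintype_card] using h

lemma PIaux.expand_eval (hB' : ∀ χ ∈ B', IsIrrChar H χ)
    (L : ZIrr B' →ₗ[ℤ] ZIrr B'') (x : ZIrr B') (k : K) :
    ((L x : ZIrr B'') : K → ℂ) k
      = ∑ ψ ∈ B'.attach,
          innerChar H ψ.1 (x : H → ℂ) * ((L (elt ψ.1 ψ.2) : ZIrr B'') : K → ℂ) k := by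
  classical
  obtain ⟨f, hf⟩ := x
  induction hf using Submodule.span_induction with
  | mem x h =>
      have hxB : x ∈ B' := Finset.mem_coe.mp h
      rw [Finset.sum_eq_single (⟨x, hxB⟩ : {y // y ∈ B'})]
      · rw [PIaux.irr_orthonormal hB' hxB hxB, if_pos rfl, one_mul]
        rfl
      · intro b _ hb
        rw [PIaux.irr_orthonormal hB' b.2 hxB, if_neg (fun hh => hb (Subtype.ext hh)),
          zero_mul]
      · intro h'; exact absurd (Finset.mem_attach _ _) h'
  | zero =>
      rw [show (⟨0, Submodule.zero_mem _⟩ : ZIrr B') = 0 from Subtype.ext rfl]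
      simp [PIaux.innerChar_right_zero]
  | add x y hx hy ihx ihy =>
      rw [show (⟨x + y, Submodule.add_mem _ hx hy⟩ : ZIrr B')
          = ⟨x, hx⟩ + ⟨y, hy⟩ from Subtype.ext rfl]
      rw [map_add]
      have hco : ((L ⟨x, hx⟩ + L ⟨y, hy⟩ : ZIrr B'') : K → ℂ) k
          = ((L ⟨x, hx⟩ : ZIrr B'') : K → ℂ) k + ((L ⟨y, hy⟩ : ZIrr B'') : K → ℂ) k := rfl
      rw [hco, ihx, ihy, ← Finset.sum_add_distrib]
      refine Finset.sum_congr rfl fun ψ _ => ?_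
      show innerChar H ψ.1 x * _ + innerChar H ψ.1 y * _ = innerChar H ψ.1 (x + y) * _
      rw [PIaux.innerChar_right_add, add_mul]
  | smul a x hx ihx =>
      rw [show (⟨a • x, Submodule.smul_mem _ a hx⟩ : ZIrr B')
          = a • ⟨x, hx⟩ from Subtype.ext rfl]
      rw [map_smul]
      have hco : ((a • L ⟨x, hx⟩ : ZIrr B'') : K → ℂ) k
          = a • ((L ⟨x, hx⟩ : ZIrr B'') : K → ℂ) k := rfl
      rw [hco, ihx, Finset.smul_sum]
      refine Finset.sum_congr rfl fun ψ _ => ?_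
      show a • (innerChar H ψ.1 x * _) = innerChar H ψ.1 (a • x) * _
      rw [PIaux.innerChar_right_zsmul, smul_mul_assoc]

lemma PIaux.conv_eq (hB' : ∀ χ ∈ B', IsIrrChar H χ)
    (I : ZIrr B →ₗ[ℤ] ZIrr B') (L : ZIrr B' →ₗ[ℤ] ZIrr B'') (g : G) (k : K) :
    (Fintype.card H : ℂ)⁻¹ * ∑ h : H, muI I g h⁻¹ * muI L h k
      = ∑ χ ∈ B.attach, χ.1 g * ((L (I (elt χ.1 χ.2)) : ZIrr B'') : K → ℂ) k := by
  have hR : ∀ χ (hχ : χ ∈ B),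
      χ g * ((L (I (elt χ hχ)) : ZIrr B'') : K → ℂ) k
        = ∑ ψ ∈ B'.attach, χ g * (innerChar H ψ.1 ((I (elt χ hχ) : ZIrr B') : H → ℂ)
            * ((L (elt ψ.1 ψ.2) : ZIrr B'') : K → ℂ) k) := by
    intro χ hχ
    rw [PIaux.expand_eval hB' L (I (elt χ hχ)) k, Finset.mul_sum]
  rw [Finset.sum_congr rfl fun (χ : {x // x ∈ B}) _ => hR χ.1 χ.2]
  simp only [muI, Finset.sum_mul_sum, innerChar, Finset.mul_sum]
  rw [Finset.sum_congr rfl fun (x : H) _ => Finset.sum_congr rfl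
        fun (ψ : {y // y ∈ B'}) _ => by rw [Finset.sum_mul, Finset.mul_sum]]
  rw [Finset.sum_comm]
  rw [Finset.sum_congr rfl fun (ψ : {y // y ∈ B'}) _ =>
        Finset.sum_comm (s := Finset.univ) (t := B.attach)]
  rw [Finset.sum_comm]
  refine Finset.sum_congr rfl fun χ _ => Finset.sum_congr rfl fun ψ _ => ?_
  rw [Finset.sum_mul, Finset.mul_sum]
  refine Finset.sum_congr rfl fun x _ => ?_
  ring

lemma PIaux.muI_conj_left (hB' : ∀ χ ∈ B', IsIrrChar H χ) (L : ZIrr B' →ₗ[ℤ] ZIrr B'')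
    (k : K) (u y : H) : muI L (u * y * u⁻¹) k = muI L y k := by
  refine Finset.sum_congr rfl fun ψ _ => ?_
  obtain ⟨V, _, hV⟩ := hB' ψ.1 ψ.2
  have hc : ψ.1 (u * y * u⁻¹) = ψ.1 y := by
    rw [hV]
    exact FDRep.char_conj V y u
  rw [hc]

lemma PIaux.muI_conj_right (hB' : ∀ χ ∈ B', IsIrrChar H χ) (I : ZIrr B →ₗ[ℤ] ZIrr B')
    (g : G) (u y : H) : muI I g (u * y * u⁻¹) = muI I g y := by
  refine Finset.sum_congr rfl fun χ _ => ?_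
  rw [PIaux.zirr_conj hB' (I (elt χ.1 χ.2)).2 u y]

end AuxZIrr

/-- Perfectly isometric is a transitive relation: the composition of perfect
isometries is a perfect isometry, and
`μ_{J∘I}(g,k) = (1/|H|) ∑_{h∈H} μ_I(g,h⁻¹) μ_J(h,k)`.  Together with reflexivity and
symmetry, being perfectly isometric is an equivalence relation on `p`-blocks. -/
theorem composition_perfect_isometry (p : ℕ) [Fact p.Prime]
    (G H K : Type) [Group G] [Fintype G] [Group H] [Fintype H] [Group K] [Fintype K]
    (B : Finset (G → ℂ)) (B' : Finset (H → ℂ)) (B'' : Finset (K → ℂ))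
    (hB : IsBlock p G B) (hB' : IsBlock p H B') (hB'' : IsBlock p K B'')
    (I : ZIrr B ≃ₗ[ℤ] ZIrr B') (J : ZIrr B' ≃ₗ[ℤ] ZIrr B'')
    (hI : IsPerfIso p B B' I) (hJ : IsPerfIso p B' B'' J) :
    IsPerfIso p B B'' (I.trans J) ∧
    ∀ (g : G) (k : K), muI (I.trans J).toLinearMap g k =
      (Fintype.card H : ℂ)⁻¹ * ∑ h : H, muI I.toLinearMap g h⁻¹ * muI J.toLinearMap h k := by
  classical
  have hp : p.Prime := Fact.out
  have hBirr := hB.1.1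
  have hB'irr := hB'.1.1
  have hB''irr := hB''.1.1
  have hHne : (Fintype.card H) ≠ 0 := Fintype.card_ne_zero
  have hconv : ∀ (g : G) (k : K), muI (I.trans J).toLinearMap g k =
      (Fintype.card H : ℂ)⁻¹ * ∑ h : H, muI I.toLinearMap g h⁻¹ * muI J.toLinearMap h k := by
    intro g k
    have h1 : muI (I.trans J).toLinearMap g k
        = ∑ χ ∈ B.attach, χ.1 g
            * ((J.toLinearMap (I.toLinearMap (elt χ.1 χ.2)) : ZIrr B'') : K → ℂ) k := rfl
    rw [h1, ← PIaux.conv_eq hB'irr I.toLinearMap J.toLinearMap g k]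
  refine ⟨⟨?_, ?_, ?_⟩, hconv⟩
  · intro x y
    have h1 : (I.trans J) x = J (I x) := rfl
    have h2 : (I.trans J) y = J (I y) := rfl
    rw [h1, h2, hJ.1 (I x) (I y), hI.1 x y]
  · -- separation condition
    intro g k hxor
    rw [hconv g k]
    refine mul_eq_zero_of_right _ (Finset.sum_eq_zero fun h _ => ?_)
    by_cases hh : pRegular p h
    · rcases hxor with ⟨hg, hk⟩ | ⟨hk, hg⟩
      · exact mul_eq_zero_of_right _ (hJ.2.1 h k (Or.inl ⟨hh, hk⟩))
      · exact mul_eq_zero_of_left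
          (hI.2.1 g h⁻¹ (Or.inr ⟨(PIaux.pRegular_inv h).mpr hh, hg⟩)) _
    · rcases hxor with ⟨hg, hk⟩ | ⟨hk, hg⟩
      · exact mul_eq_zero_of_left
          (hI.2.1 g h⁻¹ (Or.inl ⟨hg, fun hr => hh ((PIaux.pRegular_inv h).mp hr)⟩)) _
      · exact mul_eq_zero_of_right _ (hJ.2.1 h k (Or.inr ⟨hk, hh⟩))
  · -- integrality condition
    intro g k
    have hμint : IsIntegral ℤ (muI (I.trans J).toLinearMap g k) := by
      refine IsIntegral.sum _ fun χ _ => ?_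
      refine IsIntegral.mul ?_ ?_
      · obtain ⟨V, _, hV⟩ := hBirr χ.1 χ.2
        rw [hV]
        exact PIaux.char_value_integral V g
      · exact PIaux.zirr_value_integral hB''irr
          ((I.trans J).toLinearMap (elt χ.1 χ.2)).2 k
    have hFconj : ∀ u y : H,
        muI I.toLinearMap g (u * y * u⁻¹)⁻¹ * muI J.toLinearMap (u * y * u⁻¹) k
          = muI I.toLinearMap g y⁻¹ * muI J.toLinearMap y k := by
      intro u y
      have hinv : (u * y * u⁻¹)⁻¹ = u * y⁻¹ * u⁻¹ := by group
      rw [hinv, PIaux.muI_conj_right hB'irr I.toLinearMap g u y⁻¹,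
        PIaux.muI_conj_left hB'irr J.toLinearMap k u y]
    have hcls := PIaux.sum_over_classes
      (fun h : H => muI I.toLinearMap g h⁻¹ * muI J.toLinearMap h k) hFconj
    constructor
    · -- divide by the p-part of |C_G(g)|
      have hc0 : ((centOrderP p g : ℕ) : ℂ) ≠ 0 :=
        Nat.cast_ne_zero.mpr (pow_pos hp.pos _).ne'
      refine PIaux.coprime_divisors_integral
        (a := centOrderP p g) (b := ordCompl[p] (Fintype.card H))
        (Nat.Coprime.pow_left _ (Nat.coprime_ordCompl hp hHne)) ?_ ?_
      · rw [mul_comm, div_mul_cancel₀ _ hc0]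
        exact hμint
      · rw [hconv g k, hcls, Finset.sum_div, Finset.mul_sum]
        refine IsIntegral.sum _ fun h₀ _ => ?_
        have hb_dvd : ordCompl[p] (Nat.card (Subgroup.centralizer ({h₀} : Set H)))
            ∣ ordCompl[p] (Fintype.card H) := by
          refine Nat.ordCompl_dvd_ordCompl_of_dvd ?_ p
          rw [← Nat.card_eq_fintype_card]
          exact Subgroup.card_subgroup_dvd_card _
        have hnC0 : (Nat.card (Subgroup.centralizer ({h₀} : Set H))) ≠ 0 := Nat.card_pos.ne'
        have e1 : ((Nat.card (Subgroup.centralizer ({h₀} : Set H)) : ℕ) : ℂ)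
            = ((centOrderP p h₀ : ℕ) : ℂ)
              * ((ordCompl[p] (Nat.card (Subgroup.centralizer ({h₀} : Set H))) : ℕ) : ℂ) := by
          exact_mod_cast congrArg (Nat.cast : ℕ → ℂ)
            (Nat.ordProj_mul_ordCompl_eq_self
              (Nat.card (Subgroup.centralizer ({h₀} : Set H))) p).symm
        have e2 : ((ordCompl[p] (Fintype.card H) : ℕ) : ℂ)
            = ((ordCompl[p] (Nat.card (Subgroup.centralizer ({h₀} : Set H))) : ℕ) : ℂ)
              * ((ordCompl[p] (Fintype.card H)
                  / ordCompl[p] (Nat.card (Subgroup.centralizer ({h₀} : Set H))) : ℕ) : ℂ) := by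
          exact_mod_cast congrArg (Nat.cast : ℕ → ℂ) (Nat.mul_div_cancel' hb_dvd).symm
        have ha0 : ((centOrderP p h₀ : ℕ) : ℂ) ≠ 0 :=
          Nat.cast_ne_zero.mpr (pow_pos hp.pos _).ne'
        have hbb0 : ((ordCompl[p] (Nat.card (Subgroup.centralizer ({h₀} : Set H))) : ℕ) : ℂ) ≠ 0 :=
          Nat.cast_ne_zero.mpr (Nat.ordCompl_pos p hnC0).ne'
        have heq : ((ordCompl[p] (Fintype.card H) : ℕ) : ℂ)
            * (((Nat.card (Subgroup.centralizer ({h₀} : Set H)) : ℕ) : ℂ)⁻¹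
                * (muI I.toLinearMap g h₀⁻¹ * muI J.toLinearMap h₀ k)
                / ((centOrderP p g : ℕ) : ℂ))
            = (muI I.toLinearMap g h₀⁻¹ / ((centOrderP p g : ℕ) : ℂ))
              * (muI J.toLinearMap h₀ k / ((centOrderP p h₀ : ℕ) : ℂ))
              * ((ordCompl[p] (Fintype.card H)
                  / ordCompl[p] (Nat.card (Subgroup.centralizer ({h₀} : Set H))) : ℕ) : ℂ) := by
          rw [e2, e1]
          exact PIaux.arith ha0 hbb0 hc0
        rw [heq]
        exact ((hI.2.2 g h₀⁻¹).1.mul (hJ.2.2 h₀ k).1).mul (PIaux.natCast_integral _)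
    · -- divide by the p-part of |C_K(k)|
      have hc0 : ((centOrderP p k : ℕ) : ℂ) ≠ 0 :=
        Nat.cast_ne_zero.mpr (pow_pos hp.pos _).ne'
      refine PIaux.coprime_divisors_integral
        (a := centOrderP p k) (b := ordCompl[p] (Fintype.card H))
        (Nat.Coprime.pow_left _ (Nat.coprime_ordCompl hp hHne)) ?_ ?_
      · rw [mul_comm, div_mul_cancel₀ _ hc0]
        exact hμint
      · rw [hconv g k, hcls, Finset.sum_div, Finset.mul_sum]
        refine IsIntegral.sum _ fun h₀ _ => ?_
        have hb_dvd : ordCompl[p] (Nat.card (Subgroup.centralizer ({h₀} : Set H)))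
            ∣ ordCompl[p] (Fintype.card H) := by
          refine Nat.ordCompl_dvd_ordCompl_of_dvd ?_ p
          rw [← Nat.card_eq_fintype_card]
          exact Subgroup.card_subgroup_dvd_card _
        have hnC0 : (Nat.card (Subgroup.centralizer ({h₀} : Set H))) ≠ 0 := Nat.card_pos.ne'
        have e1 : ((Nat.card (Subgroup.centralizer ({h₀} : Set H)) : ℕ) : ℂ)
            = ((centOrderP p h₀ : ℕ) : ℂ)
              * ((ordCompl[p] (Nat.card (Subgroup.centralizer ({h₀} : Set H))) : ℕ) : ℂ) := by
          exact_mod_cast congrArg (Nat.cast : ℕ → ℂ)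
            (Nat.ordProj_mul_ordCompl_eq_self
              (Nat.card (Subgroup.centralizer ({h₀} : Set H))) p).symm
        have e2 : ((ordCompl[p] (Fintype.card H) : ℕ) : ℂ)
            = ((ordCompl[p] (Nat.card (Subgroup.centralizer ({h₀} : Set H))) : ℕ) : ℂ)
              * ((ordCompl[p] (Fintype.card H)
                  / ordCompl[p] (Nat.card (Subgroup.centralizer ({h₀} : Set H))) : ℕ) : ℂ) := by
          exact_mod_cast congrArg (Nat.cast : ℕ → ℂ) (Nat.mul_div_cancel' hb_dvd).symm
        have ha0 : ((centOrderP p h₀ : ℕ) : ℂ) ≠ 0 :=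
          Nat.cast_ne_zero.mpr (pow_pos hp.pos _).ne'
        have hbb0 : ((ordCompl[p] (Nat.card (Subgroup.centralizer ({h₀} : Set H))) : ℕ) : ℂ) ≠ 0 :=
          Nat.cast_ne_zero.mpr (Nat.ordCompl_pos p hnC0).ne'
        have heq : ((ordCompl[p] (Fintype.card H) : ℕ) : ℂ)
            * (((Nat.card (Subgroup.centralizer ({h₀} : Set H)) : ℕ) : ℂ)⁻¹
                * (muI I.toLinearMap g h₀⁻¹ * muI J.toLinearMap h₀ k)
                / ((centOrderP p k : ℕ) : ℂ))
            = (muI I.toLinearMap g h₀⁻¹ / ((centOrderP p h₀ : ℕ) : ℂ))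
              * (muI J.toLinearMap h₀ k / ((centOrderP p k : ℕ) : ℂ))
              * ((ordCompl[p] (Fintype.card H)
                  / ordCompl[p] (Nat.card (Subgroup.centralizer ({h₀} : Set H))) : ℕ) : ℂ) := by
          rw [e2, e1]
          exact PIaux.arith2 ha0 hbb0 hc0
        rw [heq]
        have hIint : IsIntegral ℤ (muI I.toLinearMap g h₀⁻¹ / ((centOrderP p h₀ : ℕ) : ℂ)) := by
          have hcent : centOrderP p h₀⁻¹ = centOrderP p h₀ := by
            unfold centOrderP
            rw [PIaux.centralizer_inv]
          have := (hI.2.2 g h₀⁻¹).2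
          rwa [hcent] at this
        exact (hIint.mul (hJ.2.2 h₀ k).2).mul (PIaux.natCast_integral _)

end
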